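/- Let f ≥ 1. Consider 2f+1 honest observations of which 2f equal Hmin and one equals Hmax, and f Byzantine observations each equal to Hmax + c for some c > 0. Then there exists a choice of 2f+1 observations out of these 3f+1 whose median equals Hmax, while the median of the 2f+1 honest observations equals Hmin. Hence the error of the median-of-(2f+1) rule can be as large as |Hmax − Hmin|. -/

import Mathlib

lemma sort_coe_of_sorted (l : List ℝ) (h : l.Pairwise (· ≤ ·)) :
    (↑l : Multiset ℝ).sort (· ≤ ·) = l :=
  List.Perm.eq_of_pairwise'
    (Multiset.pairwise_sort _ _) h
    (by rw [← Multiset.coe_eq_coe, Multiset.sort_eq])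

/-- Median of a multiset of odd size 2f+1: its (f+1)-st smallest element. -/
noncomputable def oddMedian (f : ℕ) (s : Multiset ℝ) : ℝ :=
  (s.sort (· ≤ ·))[f]!

/-- With 2f honest observations at Hmin, one honest at Hmax, and f
Byzantine at Hmax + c (c > 0), some choice of 2f+1 of the 3f+1 observations has
median Hmax, while the honest median is Hmin; hence the error of the
median-of-(2f+1) rule can be as large as |Hmax − Hmin|. -/
theorem median_error_lower_bound (f : ℕ) (hf : 1 ≤ f) (Hmin Hmax c : ℝ)
    (hle : Hmin ≤ Hmax) (hc : 0 < c) :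
    ∃ T : Multiset ℝ,
      T ≤ (Multiset.replicate (2 * f) Hmin + {Hmax}) + Multiset.replicate f (Hmax + c) ∧
      Multiset.card T = 2 * f + 1 ∧
      oddMedian f T = Hmax ∧
      oddMedian f (Multiset.replicate (2 * f) Hmin + {Hmax}) = Hmin ∧
      |oddMedian f T - oddMedian f (Multiset.replicate (2 * f) Hmin + {Hmax})|
        = |Hmax - Hmin| := by
  set T : Multiset ℝ :=
    Multiset.replicate f Hmin + {Hmax} + Multiset.replicate f (Hmax + c) with hT
  have hcoeT : T = ↑(List.replicate f Hmin ++ [Hmax] ++ List.replicate f (Hmax + c)) := by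
    rw [hT, ← Multiset.coe_replicate, ← Multiset.coe_replicate,
      ← Multiset.coe_singleton, ← Multiset.coe_add, ← Multiset.coe_add]
  have hcoeH : (Multiset.replicate (2*f) Hmin + {Hmax} : Multiset ℝ)
      = ↑(List.replicate (2*f) Hmin ++ [Hmax]) := by
    rw [← Multiset.coe_replicate, ← Multiset.coe_singleton, ← Multiset.coe_add]
  have hsortT : List.Pairwise (· ≤ ·)
      (List.replicate f Hmin ++ [Hmax] ++ List.replicate f (Hmax + c)) := by
    simp only [List.Pairwise, List.pairwise_append, List.pairwise_replicate,
      List.mem_replicate, List.mem_append, List.mem_singleton]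
    refine ⟨⟨Or.inr le_rfl, by simp, ?_⟩, Or.inr le_rfl, ?_⟩
    · rintro a ⟨-, rfl⟩ b rfl; exact hle
    · rintro a (⟨-, rfl⟩ | rfl) b ⟨-, rfl⟩ <;> linarith
  have hsortH : List.Pairwise (· ≤ ·) (List.replicate (2*f) Hmin ++ [Hmax]) := by
    simp only [List.Pairwise, List.pairwise_append, List.pairwise_replicate,
      List.mem_replicate, List.mem_singleton]
    refine ⟨Or.inr le_rfl, by simp, ?_⟩
    rintro a ⟨-, rfl⟩ b rfl; exact hle
  have hmT : oddMedian f T = Hmax := by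
    rw [oddMedian, hcoeT, sort_coe_of_sorted _ hsortT]
    have hlen : f < (List.replicate f Hmin ++ [Hmax] ++ List.replicate f (Hmax + c)).length := by
      simp
    rw [getElem!_pos (List.replicate f Hmin ++ [Hmax] ++ List.replicate f (Hmax + c)) f hlen]
    rw [List.getElem_append_left (by simp)]
    rw [List.getElem_append_right (by simp)]
    simp
  have hmH : oddMedian f (Multiset.replicate (2*f) Hmin + {Hmax}) = Hmin := by
    rw [oddMedian, hcoeH, sort_coe_of_sorted _ hsortH]
    have hlen : f < (List.replicate (2*f) Hmin ++ [Hmax]).length := by simp; omega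
    rw [getElem!_pos (List.replicate (2*f) Hmin ++ [Hmax]) f hlen]
    rw [List.getElem_append_left (by simp; omega)]
    simp
  refine ⟨T, ?_, ?_, hmT, hmH, by rw [hmT, hmH]⟩
  · rw [hT]; gcongr; omega
  · simp [hT]; omega
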